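/- arXiv:2304.09598 — 2 statements merged into one kernel-verified Lean document; each statement's English description precedes it below -/
import Mathlib

section
/- If α is any multisegment satisfying n_{α̃} + n_α = S_α + c_α, then α is a ladder multisegment. -/
/-- A segment `[b, e]` is the set of consecutive integers `{b, b+1, ..., e}`,
recorded as the pair `(b, e)` of its base `b` and end `e`. -/
abbrev Segment : Type := ℤ × ℤ

/-- A multisegment is a finite multiset of segments. -/
abbrev Multisegment : Type := Multiset Segment

/-- The length `e - b + 1` of the segment `[b, e]`. -/
def Segment.len (Δ : Segment) : ℤ := Δ.2 - Δ.1 + 1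

/-- `[b₁,e₁]` precedes `[b₂,e₂]` iff `b₁ < b₂`, `e₁ < e₂` and `b₂ ≤ e₁ + 1`. -/
def Precedes (Δ₁ Δ₂ : Segment) : Prop :=
  Δ₁.1 < Δ₂.1 ∧ Δ₁.2 < Δ₂.2 ∧ Δ₂.1 ≤ Δ₁.2 + 1

instance (Δ₁ Δ₂ : Segment) : Decidable (Precedes Δ₁ Δ₂) := by
  unfold Precedes; infer_instance

/-- Every member of a multisegment is a genuine (nonempty) segment. -/
def IsMultisegment (α : Multisegment) : Prop := ∀ Δ ∈ α, Δ.1 ≤ Δ.2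

/-- The rank `r_{i,j}`: the number of segments `[k,l]` of `α` with `k ≤ i` and `j ≤ l`. -/
def rank (α : Multisegment) (i j : ℤ) : ℕ :=
  (α.filter fun Δ => Δ.1 ≤ i ∧ j ≤ Δ.2).card

/-- `n_α`: the number of segments of `α`, counted with multiplicity. -/
def nSeg (α : Multisegment) : ℕ := Multiset.card α

instance : Std.Commutative (fun a b : ℤ => max a b) := ⟨max_comm⟩
instance : Std.Associative (fun a b : ℤ => max a b) := ⟨max_assoc⟩

/-- `L_α`: the length of the longest segment of `α` (0 for the empty multisegment). -/
def Lmax (α : Multisegment) : ℤ := (α.map Segment.len).fold (fun a b => max a b) 0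

/-- The support `∪_{Δ ∈ α} Δ` of a multisegment, as a finite set of integers. -/
noncomputable def supp (α : Multisegment) : Finset ℤ := α.toFinset.biUnion fun Δ => Finset.Icc Δ.1 Δ.2

/-- `S_α`: the number of integers in `∪_{Δ ∈ α} Δ`. -/
noncomputable def Ssize (α : Multisegment) : ℕ := (supp α).card

/-- `c_α`: the number of interval components of `∪_{Δ ∈ α} Δ`
(counted via their left endpoints). -/
noncomputable def comp (α : Multisegment) : ℕ :=
  ((supp α).filter fun x => x - 1 ∉ supp α).card

/-! ### The Mœglin–Waldspurger algorithm -/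

/-- Remove the end value from a segment, dropping it if it becomes empty. -/
def removeEnd (Δ : Segment) : Option Segment :=
  if Δ.1 ≤ Δ.2 - 1 then some (Δ.1, Δ.2 - 1) else none

/-- Among the segments of `l` with end value `m`, pick a shortest one (if any). -/
def pickShortest (m : ℤ) (l : List Segment) : Option Segment :=
  (l.filter fun Δ => Δ.2 == m).foldl (fun acc Δ =>
    match acc with
    | none => some Δ
    | some Δ' => if Δ'.1 < Δ.1 then some Δ else some Δ') none

/-- Starting from a current segment `Δ`, greedily build the Mœglin–Waldspurger chain:
at each step choose a shortest segment preceding the current one whose end value is one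
less.  Returns the chosen chain together with the unchosen segments. -/
def pickChain : ℕ → Segment → List Segment → List Segment × List Segment
  | 0, Δ, rest => ([Δ], rest)
  | n + 1, Δ, rest =>
    match pickShortest (Δ.2 - 1) (rest.filter fun Δ' => decide (Precedes Δ' Δ)) with
    | none => ([Δ], rest)
    | some Δ' =>
      let p := pickChain n Δ' (rest.erase Δ')
      (Δ :: p.1, p.2)

/-- One iteration of the Mœglin–Waldspurger algorithm: returns the produced dual
segment `[m, e]` together with the multisegment `α'` left after removing the chosen
end values. -/
def mwIter (l : List Segment) : Option (Segment × List Segment) :=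
  match (l.map fun Δ => Δ.2).max? with
  | none => none
  | some e =>
    match pickShortest e l with
    | none => none
    | some Δe =>
      let p := pickChain l.length Δe (l.erase Δe)
      some ((Δe.2 - ((p.1.length : ℤ) - 1), e), p.2 ++ p.1.filterMap removeEnd)

/-- The total number of integers (with multiplicity) in a list of segments. -/
def totalSize (l : List Segment) : ℕ := (l.map fun Δ => (Δ.2 - Δ.1 + 1).toNat).sum

/-- Fueled iteration of the Mœglin–Waldspurger algorithm. -/
def mwAux : ℕ → List Segment → List Segment
  | 0, _ => []
  | n + 1, l =>
    match mwIter l with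
    | none => []
    | some (Δ', l') => Δ' :: mwAux n l'

/-- The Mœglin–Waldspurger dual `α̃` of a multisegment `α`. -/
noncomputable def dual (α : Multisegment) : Multisegment :=
  (mwAux (totalSize α.toList) α.toList : List Segment)

/-! ### The partial order on multisegments -/

/-- An elementary move on multisegments: either the union–intersection move
(replace distinct overlapping `Δ₁, Δ₂` by `Δ₁ ∩ Δ₂` and `Δ₁ ∪ Δ₂`) or the
conjunction move (replace two disjoint adjacent segments by their union). -/
inductive MoveStep : Multisegment → Multisegment → Prop
  | unionInter (α : Multisegment) (Δ₁ Δ₂ : Segment)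
      (hmeet : max Δ₁.1 Δ₂.1 ≤ min Δ₁.2 Δ₂.2) (hne : Δ₁ ≠ Δ₂) :
      MoveStep (Δ₁ ::ₘ Δ₂ ::ₘ α)
        ((max Δ₁.1 Δ₂.1, min Δ₁.2 Δ₂.2) ::ₘ (min Δ₁.1 Δ₂.1, max Δ₁.2 Δ₂.2) ::ₘ α)
  | conj (α : Multisegment) (Δ₁ Δ₂ : Segment) (h : Δ₂.1 = Δ₁.2 + 1) :
      MoveStep (Δ₁ ::ₘ Δ₂ ::ₘ α) ((Δ₁.1, Δ₂.2) ::ₘ α)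

/-- The partial order `α ≤ β` on multisegments, generated by the elementary moves. -/
def mle (α β : Multisegment) : Prop := Relation.ReflTransGen MoveStep α β

/-- A ladder multisegment: the segments can be listed with strictly increasing
bases and strictly increasing ends. -/
def IsLadder (α : Multisegment) : Prop :=
  ∃ l : List Segment, (l : Multiset Segment) = α ∧
    l.Chain' fun Δ₁ Δ₂ => Δ₁.1 < Δ₂.1 ∧ Δ₁.2 < Δ₂.2

/-- `C_α`: the maximal number of (nonempty) components in a decomposition
`α = ⊔ᵢ αᵢ` satisfying `α̃ = ⊔ᵢ α̃ᵢ`. -/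
noncomputable def Cmax (α : Multisegment) : ℕ :=
  sSup {n | ∃ parts : Multiset Multisegment, Multiset.card parts = n ∧
    (∀ γ ∈ parts, γ ≠ 0) ∧ parts.sum = α ∧ (parts.map dual).sum = dual α}

/-- The simple multisegment `{[b,e], [b+1,e+1], ..., [b+n-1,e+n-1]}`. -/
def simpleMS (b e : ℤ) (n : ℕ) : Multisegment :=
  (Multiset.range n).map fun i => (b + i, e + i)

/-- The symmetric simple multisegment `{[-e,b], [-e+1,b+1], ..., [-b,e]}`. -/
def symmSimple (b e : ℤ) : Multisegment :=
  (Multiset.range (e - b + 1).toNat).map fun i => (-e + i, b + i)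


/-! ### Auxiliary lemmas -/

section Aux

open Multiset List

private lemma coe_erase_seg (l : List Segment) (a : Segment) :
    ((l.erase a : List Segment) : Multiset Segment) = (l : Multiset Segment).erase a := by
  induction l with
  | nil => rfl
  | cons b t ih =>
    rw [List.erase_cons]
    by_cases h : b = a
    · subst h
      rw [if_pos (by simp)]
      rw [show ((b :: t : List Segment) : Multiset Segment) = b ::ₘ (t : Multiset Segment) by
        simp [Multiset.cons_coe]]
      rw [Multiset.erase_cons_head]
    · have hb : (b == a) = false := by simpa using h
      rw [hb]
      simp only [Bool.false_eq_true, if_false]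
      have h1 : ((b :: t.erase a : List Segment) : Multiset Segment)
          = b ::ₘ ((t.erase a : List Segment) : Multiset Segment) := by
        simp [Multiset.cons_coe]
      have h2 : ((b :: t : List Segment) : Multiset Segment) = b ::ₘ (t : Multiset Segment) := by
        simp [Multiset.cons_coe]
      rw [h1, ih, h2, Multiset.erase_cons_tail _ h]

private lemma foldl_ps_some (L : List Segment) (a : Segment) :
    ∃ b, L.foldl (fun acc Δ =>
      match acc with
      | none => some Δ
      | some Δ' => if Δ'.1 < Δ.1 then some Δ else some Δ') (some a) = some b ∧
      b ∈ a :: L ∧ a.1 ≤ b.1 ∧ ∀ x ∈ L, x.1 ≤ b.1 := by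
  induction L generalizing a with
  | nil => exact ⟨a, rfl, by simp, le_refl _, by simp⟩
  | cons x xs ih =>
    simp only [List.foldl_cons]
    by_cases h : a.1 < x.1
    · obtain ⟨b, hb, hmem, hle, hall⟩ := ih x
      refine ⟨b, by simpa [h] using hb, List.mem_cons_of_mem _ hmem,
        le_of_lt (lt_of_lt_of_le h hle), ?_⟩
      intro y hy
      rcases List.mem_cons.mp hy with h1 | h1
      · exact h1 ▸ hle
      · exact hall y h1
    · obtain ⟨b, hb, hmem, hle, hall⟩ := ih a
      refine ⟨b, by simpa [h] using hb, ?_, hle, ?_⟩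
      · rcases List.mem_cons.mp hmem with h1 | h1
        · simp [h1]
        · simp [h1]
      · intro y hy
        rcases List.mem_cons.mp hy with h1 | h1
        · exact h1 ▸ le_trans (not_lt.mp h) hle
        · exact hall y h1

lemma pickShortest_spec {m : ℤ} {l : List Segment} {Δ : Segment}
    (h : pickShortest m l = some Δ) :
    Δ ∈ l ∧ Δ.2 = m ∧ ∀ x ∈ l, x.2 = m → x.1 ≤ Δ.1 := by
  unfold pickShortest at h
  set F := l.filter (fun Δ => Δ.2 == m) with hF
  have hFprop : ∀ x, x ∈ F → x ∈ l ∧ x.2 = m := by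
    intro x hx
    rw [hF, List.mem_filter] at hx
    exact ⟨hx.1, by simpa using hx.2⟩
  have hFall : ∀ x ∈ l, x.2 = m → x ∈ F := by
    intro x hx hxm
    rw [hF, List.mem_filter]
    exact ⟨hx, by simpa using hxm⟩
  match hFe : F with
  | [] => simp at h
  | y :: ys =>
    simp only [List.foldl_cons] at h
    obtain ⟨b, hb, hmem, hle, hall⟩ := foldl_ps_some ys y
    rw [hb] at h
    obtain rfl : b = Δ := by injection h
    refine ⟨(hFprop _ hmem).1, (hFprop _ hmem).2, ?_⟩
    intro x hx hxm
    rcases List.mem_cons.mp (hFall x hx hxm) with h1 | h1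
    · exact h1 ▸ hle
    · exact hall x h1

lemma pickShortest_isSome {m : ℤ} {l : List Segment} {x : Segment}
    (hx : x ∈ l) (hxm : x.2 = m) : ∃ Δ, pickShortest m l = some Δ := by
  unfold pickShortest
  set F := l.filter (fun Δ => Δ.2 == m) with hF
  have hxF : x ∈ F := by rw [hF, List.mem_filter]; exact ⟨hx, by simpa using hxm⟩
  match hFe : F with
  | [] => simp at hxF
  | y :: ys =>
    simp only [List.foldl_cons]
    obtain ⟨b, hb, _, _, _⟩ := foldl_ps_some ys y
    exact ⟨b, hb⟩

/-- The relation holding between consecutive elements of a Mœglin–Waldspurger chain,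
relative to the final remainder `r'`. -/
def ChRel (r' : List Segment) (a b : Segment) : Prop :=
  b.1 < a.1 ∧ b.2 = a.2 - 1 ∧ a.1 ≤ b.2 + 1 ∧
    ∀ x ∈ r', x.1 < a.1 → x.2 = a.2 - 1 → x.1 ≤ b.1

lemma pickChain_spec : ∀ (n : ℕ) (Δ : Segment) (rest : List Segment),
    Δ.1 ≤ Δ.2 → (∀ x ∈ rest, x.1 ≤ x.2) →
    ∃ ch r', pickChain n Δ rest = (ch, r') ∧ ch ≠ [] ∧ ch.head? = some Δ ∧
      ((ch : Multiset Segment) + (r' : Multiset Segment) = Δ ::ₘ (rest : Multiset Segment)) ∧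
      List.Chain' (ChRel r') ch := by
  intro n
  induction n with
  | zero =>
    intro Δ rest _ _
    exact ⟨[Δ], rest, rfl, by simp, rfl, by simp, List.isChain_singleton _⟩
  | succ n ih =>
    intro Δ rest hΔ hrest
    show ∃ ch r', (match pickShortest (Δ.2 - 1) (rest.filter fun Δ' => decide (Precedes Δ' Δ)) with
      | none => ([Δ], rest)
      | some Δ' =>
        let p := pickChain n Δ' (rest.erase Δ')
        (Δ :: p.1, p.2)) = (ch, r') ∧ _
    match hps : pickShortest (Δ.2 - 1) (rest.filter fun Δ' => decide (Precedes Δ' Δ)) with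
    | none =>
      exact ⟨[Δ], rest, by simp, by simp, rfl, by simp, List.isChain_singleton _⟩
    | some Δ' =>
      obtain ⟨hmem, hend, hmax⟩ := pickShortest_spec hps
      rw [List.mem_filter] at hmem
      obtain ⟨hΔ'rest, hprec⟩ := hmem
      have hprec : Precedes Δ' Δ := by simpa using hprec
      have hΔ'v : Δ'.1 ≤ Δ'.2 := hrest _ hΔ'rest
      have herase : ∀ x ∈ rest.erase Δ', x.1 ≤ x.2 := fun x hx => hrest x (List.mem_of_mem_erase hx)
      obtain ⟨ch', r', hpc, hne, hhead, hms, hchain⟩ := ih Δ' (rest.erase Δ') hΔ'v herase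
      refine ⟨Δ :: ch', r', by simp [hpc], by simp, rfl, ?_, ?_⟩
      · have : (ch' : Multiset Segment) + (r' : Multiset Segment)
            = Δ' ::ₘ ((rest.erase Δ' : List Segment) : Multiset Segment) := hms
        calc ((Δ :: ch' : List Segment) : Multiset Segment) + (r' : Multiset Segment)
            = Δ ::ₘ ((ch' : Multiset Segment) + (r' : Multiset Segment)) := by
              simp [Multiset.cons_coe, Multiset.cons_add]
          _ = Δ ::ₘ (Δ' ::ₘ ((rest.erase Δ' : List Segment) : Multiset Segment)) := by rw [this]
          _ = Δ ::ₘ (rest : Multiset Segment) := by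
              congr 1
              rw [coe_erase_seg]
              exact Multiset.cons_erase (show Δ' ∈ (rest : Multiset Segment) by exact_mod_cast hΔ'rest)
      · obtain ⟨c, cs, hch⟩ := List.exists_cons_of_ne_nil hne
        have hc : c = Δ' := by rw [hch] at hhead; simpa using hhead
        rw [hch, hc] at hchain hms
        rw [hch, hc]
        refine List.isChain_cons_cons.mpr ⟨?_, hchain⟩
        have hr'sub : ∀ x ∈ r', x ∈ rest := by
          intro x hx
          have hxm : x ∈ (r' : Multiset Segment) := by exact_mod_cast hx
          have hle : (r' : Multiset Segment) ≤ ((rest.erase Δ' : List Segment) : Multiset Segment) := by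
            have h1 : (Δ' ::ₘ ((cs : List Segment) : Multiset Segment)) + (r' : Multiset Segment)
                = Δ' ::ₘ ((rest.erase Δ' : List Segment) : Multiset Segment) := by
              rw [← hms]; simp [Multiset.cons_coe, Multiset.cons_add]
            have h2 : ((cs : List Segment) : Multiset Segment) + (r' : Multiset Segment)
                = ((rest.erase Δ' : List Segment) : Multiset Segment) := by
              rw [Multiset.cons_add] at h1
              exact (Multiset.cons_inj_right _).mp h1
            rw [← h2]
            exact Multiset.le_add_left _ _
          have : x ∈ ((rest.erase Δ' : List Segment) : Multiset Segment) := Multiset.mem_of_le hle hxm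
          exact List.mem_of_mem_erase (by exact_mod_cast this)
        refine ⟨hprec.1, hend, ?_, ?_⟩
        · rw [hend]; omega
        · intro x hx hx1 hx2
          refine hmax x ?_ hx2
          rw [List.mem_filter]
          refine ⟨hr'sub x hx, ?_⟩
          simp only [decide_eq_true_eq]
          exact ⟨hx1, by omega, by omega⟩


lemma chain_ends {r' ch : List Segment} (hchain : List.Chain' (ChRel r') ch)
    {Δe : Segment} (hh : ch.head? = some Δe) :
    ∀ i (h : i < ch.length), (ch.get ⟨i, h⟩).2 = Δe.2 - i := by
  intro i
  induction i with
  | zero =>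
    intro h
    match ch, hh with
    | c :: cs, hh =>
      have : c = Δe := by simpa using hh
      simpa using congrArg Prod.snd this
  | succ n ih =>
    intro h
    have h' : n + 1 < ch.length := h
    have hn : n < ch.length := Nat.lt_of_succ_lt h
    have hrel : ChRel r' (ch.get ⟨n, hn⟩) (ch.get ⟨n + 1, h'⟩) :=
      (List.isChain_iff_getElem.mp hchain) n (by omega)
    have h2 := hrel.2.1
    have := ih hn
    push_cast
    omega

lemma mwIter_spec (l : List Segment) (hl : l ≠ []) (hv : ∀ x ∈ l, x.1 ≤ x.2) :
    ∃ (e : ℤ) (Δe : Segment) (ch r' : List Segment),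
      mwIter l = some ((Δe.2 - ((ch.length : ℤ) - 1), e), r' ++ ch.filterMap removeEnd) ∧
      ch ≠ [] ∧ ch.head? = some Δe ∧ Δe.2 = e ∧
      ((ch : Multiset Segment) + (r' : Multiset Segment) = (l : Multiset Segment)) ∧
      List.Chain' (ChRel r') ch ∧
      (∀ x ∈ l, x.2 ≤ e) ∧
      (∀ x ∈ l, x.2 = e → x.1 ≤ Δe.1) := by
  have hmapne : l.map (fun Δ => Δ.2) ≠ [] := by
    intro h; exact hl (List.map_eq_nil_iff.mp h)
  obtain ⟨y, hy⟩ := List.exists_mem_of_ne_nil _ hmapne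
  have hsome := List.isSome_max?_of_mem hy
  obtain ⟨e, he⟩ := Option.isSome_iff_exists.mp hsome
  have hemem : e ∈ l.map (fun Δ => Δ.2) :=
    List.max?_mem he
  have hele : ∀ b ∈ l.map (fun Δ => Δ.2), b ≤ e :=
    (List.max?_le_iff he).mp le_rfl
  obtain ⟨x0, hx0l, hx0e⟩ := List.mem_map.mp hemem
  obtain ⟨Δe, hps⟩ := pickShortest_isSome hx0l hx0e
  obtain ⟨hΔel, hΔe2, hΔemax⟩ := pickShortest_spec hps
  have herasev : ∀ x ∈ l.erase Δe, x.1 ≤ x.2 := fun x hx => hv x (List.mem_of_mem_erase hx)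
  obtain ⟨ch, r', hpc, hchne, hchhead, hms, hchain⟩ :=
    pickChain_spec l.length Δe (l.erase Δe) (hv _ hΔel) herasev
  refine ⟨e, Δe, ch, r', ?_, hchne, hchhead, hΔe2, ?_, hchain, ?_, ?_⟩
  · unfold mwIter
    simp only [he, hps, hpc]
  · rw [hms, coe_erase_seg]
    exact Multiset.cons_erase (show Δe ∈ (l : Multiset Segment) by exact_mod_cast hΔel)
  · intro x hx
    exact hele _ (List.mem_map.mpr ⟨x, hx, rfl⟩)
  · intro x hx hxe
    exact hΔemax x hx hxe


lemma mem_supp {α : Multisegment} {z : ℤ} :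
    z ∈ supp α ↔ ∃ Δ ∈ α, Δ.1 ≤ z ∧ z ≤ Δ.2 := by
  simp [supp, Finset.mem_biUnion, Multiset.mem_toFinset, Finset.mem_Icc]

lemma removeEnd_eq_some {Δ Δ' : Segment} :
    removeEnd Δ = some Δ' ↔ Δ.1 ≤ Δ.2 - 1 ∧ Δ' = (Δ.1, Δ.2 - 1) := by
  unfold removeEnd
  by_cases h : Δ.1 ≤ Δ.2 - 1 <;> simp [h] <;> tauto

lemma removeEnd_eq_none {Δ : Segment} :
    removeEnd Δ = none ↔ Δ.2 ≤ Δ.1 := by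
  unfold removeEnd
  by_cases h : Δ.1 ≤ Δ.2 - 1 <;> simp [h] <;> omega

lemma filterMap_removeEnd_length (l : List Segment) :
    (l.filterMap removeEnd).length + (l.filter (fun Δ => decide (Δ.2 ≤ Δ.1))).length
      = l.length := by
  induction l with
  | nil => rfl
  | cons Δ t ih =>
    by_cases h : Δ.2 ≤ Δ.1
    · have h1 : removeEnd Δ = none := removeEnd_eq_none.mpr h
      simp only [List.filterMap_cons, h1, List.filter_cons]
      rw [if_pos (by simpa using h)]
      simp only [List.length_cons]
      omega
    · have h1 : removeEnd Δ = some (Δ.1, Δ.2 - 1) := removeEnd_eq_some.mpr ⟨by omega, rfl⟩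
      simp only [List.filterMap_cons, h1, List.filter_cons]
      rw [if_neg (by simpa using h)]
      simp only [List.length_cons]
      omega

/-- Two (occurrences of) segments of `α`, one containing the other. -/
def Nested (α : Multisegment) : Prop :=
  ∃ Δ Δ' β, α = Δ ::ₘ Δ' ::ₘ β ∧ Δ.1 ≤ Δ'.1 ∧ Δ'.2 ≤ Δ.2

lemma nested_iff {α : Multisegment} : Nested α ↔
    ∃ Δ, Δ ∈ α ∧ ∃ Δ', Δ' ∈ α.erase Δ ∧ Δ.1 ≤ Δ'.1 ∧ Δ'.2 ≤ Δ.2 := by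
  constructor
  · rintro ⟨Δ, Δ', β, h, h1, h2⟩
    refine ⟨Δ, by simp [h], Δ', ?_, h1, h2⟩
    rw [h, Multiset.erase_cons_head]
    simp
  · rintro ⟨Δ, hΔ, Δ', hΔ', h1, h2⟩
    exact ⟨Δ, Δ', (α.erase Δ).erase Δ',
      by rw [Multiset.cons_erase hΔ', Multiset.cons_erase hΔ], h1, h2⟩

lemma nested_of_parts {s t : Multiset Segment} {X Y : Segment}
    (hX : X ∈ s) (hY : Y ∈ t) (h1 : X.1 ≤ Y.1) (h2 : Y.2 ≤ X.2) : Nested (s + t) := by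
  rw [nested_iff]
  refine ⟨X, Multiset.mem_add.mpr (Or.inl hX), Y, ?_, h1, h2⟩
  rw [Multiset.erase_add_left_pos t hX]
  exact Multiset.mem_add.mpr (Or.inr hY)

lemma nested_of_parts' {s t : Multiset Segment} {X Y : Segment}
    (hX : X ∈ t) (hY : Y ∈ s) (h1 : X.1 ≤ Y.1) (h2 : Y.2 ≤ X.2) : Nested (s + t) := by
  rw [nested_iff]
  refine ⟨X, Multiset.mem_add.mpr (Or.inr hX), Y, ?_, h1, h2⟩
  rw [Multiset.erase_add_right_pos s hX]
  exact Multiset.mem_add.mpr (Or.inl hY)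

lemma nested_of_left {s t : Multiset Segment} {X Y : Segment}
    (hX : X ∈ s) (hY : Y ∈ s.erase X) (h1 : X.1 ≤ Y.1) (h2 : Y.2 ≤ X.2) :
    Nested (s + t) := by
  rw [nested_iff]
  refine ⟨X, Multiset.mem_add.mpr (Or.inl hX), Y, ?_, h1, h2⟩
  rw [Multiset.erase_add_left_pos t hX]
  exact Multiset.mem_add.mpr (Or.inl hY)


lemma totalSize_nil : totalSize [] = 0 := rfl

lemma totalSize_cons (Δ : Segment) (t : List Segment) :
    totalSize (Δ :: t) = (Δ.2 - Δ.1 + 1).toNat + totalSize t := by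
  simp [totalSize]

lemma totalSize_filterMap (l : List Segment) (hv : ∀ x ∈ l, x.1 ≤ x.2) :
    totalSize (l.filterMap removeEnd) + l.length = totalSize l := by
  induction l with
  | nil => rfl
  | cons Δ t ih =>
    have hΔ := hv Δ List.mem_cons_self
    have ht := ih (fun x hx => hv x (List.mem_cons_of_mem _ hx))
    by_cases h : Δ.2 ≤ Δ.1
    · rw [List.filterMap_cons, removeEnd_eq_none.mpr h, totalSize_cons]
      have : (Δ.2 - Δ.1 + 1).toNat = 1 := by omega
      simp only [List.length_cons]
      omega
    · rw [List.filterMap_cons, removeEnd_eq_some.mpr ⟨by omega, rfl⟩, totalSize_cons,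
        totalSize_cons]
      simp only [List.length_cons]
      have e1 : ((Δ.2 : ℤ) - 1 - Δ.1 + 1).toNat + 1 = (Δ.2 - Δ.1 + 1).toNat := by omega
      omega

lemma totalSize_eq_zero {l : List Segment} (hv : ∀ x ∈ l, x.1 ≤ x.2)
    (h : totalSize l = 0) : l = [] := by
  cases l with
  | nil => rfl
  | cons Δ t =>
    exfalso
    have hΔ := hv Δ List.mem_cons_self
    rw [totalSize_cons] at h
    omega

/-- The step data of one iteration of the MW algorithm. -/
structure SD where
  ch : List Segment
  r' : List Segment
  e : ℤ
  hne : ch ≠ []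
  hchain : List.Chain' (ChRel r') ch
  hends : ∀ i (h : i < ch.length), (ch.get ⟨i, h⟩).2 = e - i
  hvch : ∀ x ∈ ch, x.1 ≤ x.2
  hvr : ∀ x ∈ r', x.1 ≤ x.2
  hmax : ∀ x ∈ r', x.2 = e → ∀ (h0 : 0 < ch.length), x.1 ≤ (ch.get ⟨0, h0⟩).1

namespace SD

variable (S : SD)

def k : ℕ := S.ch.length
def m : ℤ := S.e - (S.k - 1)
def A : Multisegment := (S.ch : Multiset Segment) + (S.r' : Multiset Segment)
def fm : List Segment := S.ch.filterMap removeEnd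
def A' : Multisegment := (S.r' : Multiset Segment) + (S.fm : Multiset Segment)
noncomputable def D : Finset ℤ := supp S.A \ supp S.A'
def T : Finset ℤ := ((S.ch.filter (fun Δ => decide (Δ.2 ≤ Δ.1))).map Prod.snd).toFinset
noncomputable def Bset : Finset ℤ := S.D.filter (fun z => z - 1 ∉ supp S.A)
noncomputable def Cset : Finset ℤ := (supp S.A').filter (fun z => z - 1 ∈ S.D)

lemma kpos : 0 < S.k := List.length_pos_iff.mpr S.hne

lemma mle : S.m ≤ S.e := by
  have := S.kpos
  unfold m
  have : (1 : ℤ) ≤ (S.k : ℤ) := by exact_mod_cast this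
  omega

lemma mem_fm {x : Segment} :
    x ∈ S.fm ↔ ∃ Δ ∈ S.ch, Δ.1 ≤ Δ.2 - 1 ∧ x = (Δ.1, Δ.2 - 1) := by
  unfold fm
  simp only [List.mem_filterMap]
  constructor
  · rintro ⟨Δ, hΔ, h⟩
    obtain ⟨h1, h2⟩ := removeEnd_eq_some.mp h
    exact ⟨Δ, hΔ, h1, h2⟩
  · rintro ⟨Δ, hΔ, h1, h2⟩
    exact ⟨Δ, hΔ, removeEnd_eq_some.mpr ⟨h1, h2⟩⟩

lemma valid_A' : ∀ x ∈ S.A', x.1 ≤ x.2 := by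
  intro x hx
  rw [A', Multiset.mem_add] at hx
  rcases hx with hx | hx
  · exact S.hvr x (by exact_mod_cast hx)
  · have : x ∈ S.fm := by exact_mod_cast hx
    obtain ⟨Δ, _, h1, h2⟩ := S.mem_fm.mp this
    subst h2; simpa using h1

lemma mem_A {x : Segment} : x ∈ S.A ↔ x ∈ S.ch ∨ x ∈ S.r' := by
  rw [A, Multiset.mem_add]
  constructor <;> rintro (h | h)
  · exact Or.inl (by exact_mod_cast h)
  · exact Or.inr (by exact_mod_cast h)
  · exact Or.inl (by exact_mod_cast h)
  · exact Or.inr (by exact_mod_cast h)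

lemma mem_A' {x : Segment} : x ∈ S.A' ↔ x ∈ S.r' ∨ x ∈ S.fm := by
  rw [A', Multiset.mem_add]
  constructor <;> rintro (h | h)
  · exact Or.inl (by exact_mod_cast h)
  · exact Or.inr (by exact_mod_cast h)
  · exact Or.inl (by exact_mod_cast h)
  · exact Or.inr (by exact_mod_cast h)

lemma valid_A : ∀ x ∈ S.A, x.1 ≤ x.2 := by
  intro x hx
  rcases S.mem_A.mp hx with h | h
  · exact S.hvch x h
  · exact S.hvr x h

lemma ends_mem {Δ : Segment} (h : Δ ∈ S.ch) : ∃ (i : ℕ) (hi : i < S.k), S.ch.get ⟨i, hi⟩ = Δ := by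
  obtain ⟨⟨i, hi⟩, hg⟩ := List.mem_iff_get.mp h
  exact ⟨i, hi, hg⟩

lemma end_range {Δ : Segment} (h : Δ ∈ S.ch) : S.m ≤ Δ.2 ∧ Δ.2 ≤ S.e := by
  obtain ⟨i, hi, hg⟩ := S.ends_mem h
  have := S.hends i hi
  rw [hg] at this
  have hik : (i : ℤ) ≤ (S.k : ℤ) - 1 := by
    have h1 : (i : ℤ) + 1 ≤ (S.k : ℤ) := by exact_mod_cast hi
    omega
  unfold m
  omega

lemma Icc_subset_supp : Finset.Icc S.m S.e ⊆ supp S.A := by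
  intro z hz
  rw [Finset.mem_Icc] at hz
  have hik : ((S.e - z).toNat) < S.k := by
    have h1 : (0:ℤ) ≤ S.e - z := by omega
    have h2 : S.e - z ≤ (S.k : ℤ) - 1 := by unfold m at hz; omega
    omega
  set i := (S.e - z).toNat with hi
  have hend := S.hends i hik
  have hzi : (i : ℤ) = S.e - z := by omega
  rw [mem_supp]
  refine ⟨S.ch.get ⟨i, hik⟩, S.mem_A.mpr (Or.inl (S.ch.get_mem _)), ?_, ?_⟩
  · have := S.hvch _ (S.ch.get_mem ⟨i, hik⟩)
    omega
  · omega

lemma supp_A'_subset : supp S.A' ⊆ supp S.A := by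
  intro z hz
  rw [mem_supp] at hz ⊢
  obtain ⟨Δ, hΔ, h1, h2⟩ := hz
  rcases S.mem_A'.mp hΔ with h | h
  · exact ⟨Δ, S.mem_A.mpr (Or.inr h), h1, h2⟩
  · obtain ⟨Δ0, hΔ0, hb, he⟩ := S.mem_fm.mp h
    subst he
    exact ⟨Δ0, S.mem_A.mpr (Or.inl hΔ0), by simpa using h1, by simp at h2; omega⟩

lemma D_subset : S.D ⊆ Finset.Icc S.m S.e := by
  intro z hz
  rw [D, Finset.mem_sdiff] at hz
  obtain ⟨hzA, hzA'⟩ := hz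
  rw [mem_supp] at hzA
  obtain ⟨Δ, hΔ, h1, h2⟩ := hzA
  rcases S.mem_A.mp hΔ with h | h
  · -- Δ is a chain element; z must be its end
    have hz2 : z = Δ.2 := by
      by_contra hne2
      apply hzA'
      rw [mem_supp]
      refine ⟨(Δ.1, Δ.2 - 1), S.mem_A'.mpr (Or.inr (S.mem_fm.mpr ⟨Δ, h, by omega, rfl⟩)), by simpa using h1, by simp; omega⟩
    obtain ⟨hm, hezz⟩ := S.end_range h
    rw [Finset.mem_Icc]
    omega
  · exfalso
    exact hzA' (mem_supp.mpr ⟨Δ, S.mem_A'.mpr (Or.inl h), h1, h2⟩)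

lemma D_singleton {z : ℤ} (hz : z ∈ S.D) (hze : z ≠ S.e) :
    ∃ (i : ℕ) (hi : i < S.k), S.ch.get ⟨i, hi⟩ = (z + 1, z + 1) := by
  have hzIcc := S.D_subset hz
  rw [Finset.mem_Icc] at hzIcc
  rw [D, Finset.mem_sdiff] at hz
  obtain ⟨hzA, hzA'⟩ := hz
  have hik : ((S.e - (z+1)).toNat) < S.k := by
    have h2 : S.e - (z+1) ≤ (S.k : ℤ) - 1 := by
      unfold m at hzIcc; omega
    have h1 : (0:ℤ) ≤ S.e - (z+1) := by omega
    omega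
  set i := (S.e - (z+1)).toNat with hidef
  refine ⟨i, hik, ?_⟩
  have hend := S.hends i hik
  have hzi : (i : ℤ) = S.e - (z + 1) := by
    have : z + 1 ≤ S.e := by omega
    omega
  set P := S.ch.get ⟨i, hik⟩ with hP
  have hend2 : P.2 = z + 1 := by omega
  have hPch : P ∈ S.ch := S.ch.get_mem _
  have hPv := S.hvch P hPch
  have hP1 : P.1 = z + 1 := by
    by_contra hne1
    have hP1z : P.1 ≤ z := by omega
    apply hzA'
    rw [mem_supp]
    exact ⟨(P.1, P.2 - 1), S.mem_A'.mpr (Or.inr (S.mem_fm.mpr ⟨P, hPch, by omega, rfl⟩)), by simpa using hP1z, by simp; omega⟩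
  show P = (z + 1, z + 1)
  exact Prod.ext hP1 hend2


lemma pairwise_ends : List.Pairwise (fun a b : Segment => b.2 < a.2) S.ch := by
  rw [List.pairwise_iff_get]
  intro i j hij
  have h1 := S.hends i.1 i.isLt
  have h2 := S.hends j.1 j.isLt
  simp only [Fin.eta] at h1 h2
  have hij' : ((i : ℕ) : ℤ) < ((j : ℕ) : ℤ) := by exact_mod_cast hij
  omega

lemma T_card : S.T.card = (S.ch.filter (fun Δ => decide (Δ.2 ≤ Δ.1))).length := by
  rw [T, List.toFinset_card_of_nodup, List.length_map]
  have hsub : (S.ch.filter (fun Δ => decide (Δ.2 ≤ Δ.1))) <+ S.ch := List.filter_sublist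
  have hpw : List.Pairwise (fun a b : Segment => b.2 < a.2)
      (S.ch.filter (fun Δ => decide (Δ.2 ≤ Δ.1))) := (S.pairwise_ends).sublist hsub
  have hpm : List.Pairwise (fun a b : ℤ => b < a)
      ((S.ch.filter (fun Δ => decide (Δ.2 ≤ Δ.1))).map Prod.snd) :=
    hpw.map Prod.snd (fun a b h => h)
  exact hpm.imp (fun h => (ne_of_lt h).symm)

lemma mem_T {y : ℤ} : y ∈ S.T ↔ ∃ Δ ∈ S.ch, Δ.2 ≤ Δ.1 ∧ Δ.2 = y := by
  rw [T]
  simp only [List.mem_toFinset, List.mem_map, List.mem_filter, decide_eq_true_eq]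
  constructor
  · rintro ⟨Δ, ⟨h1, h2⟩, h3⟩
    exact ⟨Δ, h1, h2, h3⟩
  · rintro ⟨Δ, h1, h2, h3⟩
    exact ⟨Δ, ⟨h1, h2⟩, h3⟩

lemma nSeg_split : nSeg S.A' + S.T.card = nSeg S.A := by
  have h1 : nSeg S.A = S.k + S.r'.length := by
    rw [A, nSeg]
    simp [Multiset.coe_card, k]
  have h2 : nSeg S.A' = S.r'.length + S.fm.length := by
    rw [A', nSeg]
    simp [Multiset.coe_card]
  have h3 := filterMap_removeEnd_length S.ch
  rw [h1, h2, S.T_card]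
  unfold fm k at *
  omega

lemma Ssize_split : S.D.card + Ssize S.A' = Ssize S.A := by
  rw [D, Ssize, Ssize]
  exact Finset.card_sdiff_add_card_eq_card S.supp_A'_subset

lemma supp_A'_eq : supp S.A' = supp S.A \ S.D := by
  rw [D, Finset.sdiff_sdiff_self_left]
  exact (Finset.inter_eq_right.mpr S.supp_A'_subset).symm

lemma comp_split : comp S.A + S.Cset.card = comp S.A' + S.Bset.card := by
  classical
  set s := supp S.A
  set s' := supp S.A'
  have hsplit : s = s' ∪ S.D := by
    rw [D, Finset.union_sdiff_of_subset S.supp_A'_subset]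
  have hdisj : Disjoint s' S.D := by
    rw [D]
    exact Finset.disjoint_sdiff
  -- comp S.A = |s'.filter P| + |D.filter P| where P z = z - 1 ∉ s
  have h1 : comp S.A = (s'.filter (fun z => z - 1 ∉ s)).card
      + (S.D.filter (fun z => z - 1 ∉ s)).card := by
    rw [comp]
    show (s.filter (fun z => z - 1 ∉ s)).card = _
    rw [hsplit, Finset.filter_union, Finset.card_union_of_disjoint]
    exact Finset.disjoint_filter_filter hdisj
  -- comp S.A' = |s'.filter P| + |Cset|
  have h2 : comp S.A' = (s'.filter (fun z => z - 1 ∉ s)).card + S.Cset.card := by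
    rw [comp]
    show (s'.filter (fun z => z - 1 ∉ s')).card = _
    have hU : s'.filter (fun z => z - 1 ∉ s') = s'.filter (fun z => z - 1 ∉ s) ∪ S.Cset := by
      rw [Cset, ← Finset.filter_or]
      apply Finset.filter_congr
      intro z hz
      have hD : z - 1 ∈ S.D ↔ z - 1 ∈ s ∧ z - 1 ∉ s' := by rw [D, Finset.mem_sdiff]
      have hsub : z - 1 ∈ s' → z - 1 ∈ s := fun h => S.supp_A'_subset h
      constructor
      · intro h
        by_cases hzs : z - 1 ∈ s
        · exact Or.inr (hD.mpr ⟨hzs, h⟩)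
        · exact Or.inl hzs
      · rintro (h | h)
        · exact fun hc => h (hsub hc)
        · exact (hD.mp h).2
    rw [hU, Finset.card_union_of_disjoint]
    rw [Finset.disjoint_left]
    intro a ha hb
    rw [Finset.mem_filter] at ha
    rw [Cset, Finset.mem_filter] at hb
    have : a - 1 ∈ s := by
      have := hb.2
      rw [D, Finset.mem_sdiff] at this
      exact this.1
    exact ha.2 this
  have hBc : S.Bset.card = (S.D.filter (fun z => z - 1 ∉ s)).card := by
    rw [Bset]
  omega


lemma Bset_mem {z : ℤ} (hz : z ∈ S.Bset) : z = S.m ∧ S.m ∈ S.D ∧ S.m - 1 ∉ supp S.A := by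
  rw [Bset, Finset.mem_filter] at hz
  obtain ⟨hzD, hz1⟩ := hz
  have hzIcc := S.D_subset hzD
  rw [Finset.mem_Icc] at hzIcc
  have hzm : z = S.m := by
    by_contra hne
    apply hz1
    apply S.Icc_subset_supp
    rw [Finset.mem_Icc]
    omega
  subst hzm
  exact ⟨rfl, hzD, hz1⟩

lemma B_le : S.Bset.card ≤ 1 := by
  have hsub : S.Bset ⊆ {S.m} := by
    intro z hz
    rw [Finset.mem_singleton]
    exact (S.Bset_mem hz).1
  calc S.Bset.card ≤ ({S.m} : Finset ℤ).card := Finset.card_le_card hsub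
    _ = 1 := Finset.card_singleton _

lemma image_subset_T : (S.D.erase S.e).image (· + 1) ⊆ S.T := by
  intro w hw
  rw [Finset.mem_image] at hw
  obtain ⟨z, hz, hzw⟩ := hw
  rw [Finset.mem_erase] at hz
  obtain ⟨i, hi, hget⟩ := S.D_singleton hz.2 hz.1
  rw [S.mem_T]
  refine ⟨(z + 1, z + 1), hget ▸ S.ch.get_mem _, le_refl _, by simpa using hzw⟩

lemma D_erase_le_T : (S.D.erase S.e).card ≤ S.T.card := by
  calc (S.D.erase S.e).card = ((S.D.erase S.e).image (· + 1)).card :=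
        (Finset.card_image_of_injective _ (add_left_injective 1)).symm
    _ ≤ S.T.card := Finset.card_le_card S.image_subset_T

lemma D_erase_lt_T {w : ℤ} (hw : w ∈ S.T) (hwim : w ∉ (S.D.erase S.e).image (· + 1)) :
    (S.D.erase S.e).card + 1 ≤ S.T.card := by
  have h1 : insert w ((S.D.erase S.e).image (· + 1)) ⊆ S.T :=
    Finset.insert_subset hw S.image_subset_T
  calc (S.D.erase S.e).card + 1
      = ((S.D.erase S.e).image (· + 1)).card + 1 := by
        rw [Finset.card_image_of_injective _ (add_left_injective 1)]
    _ = (insert w ((S.D.erase S.e).image (· + 1))).card := by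
        rw [Finset.card_insert_of_notMem hwim]
    _ ≤ S.T.card := Finset.card_le_card h1

lemma C_pos (hm : S.m ∈ S.D) (hex : ∃ z ∈ Finset.Icc S.m S.e, z ∉ S.D) :
    1 ≤ S.Cset.card := by
  classical
  set G := (Finset.Icc S.m S.e).filter (fun z => z ∉ S.D) with hG
  have hGne : G.Nonempty := by
    obtain ⟨z, hz1, hz2⟩ := hex
    exact ⟨z, by rw [hG, Finset.mem_filter]; exact ⟨hz1, hz2⟩⟩
  set x0 := G.min' hGne with hx0
  have hx0G : x0 ∈ G := G.min'_mem hGne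
  rw [hG, Finset.mem_filter, Finset.mem_Icc] at hx0G
  obtain ⟨⟨hx0m, hx0e⟩, hx0D⟩ := hx0G
  have hx0ne : x0 ≠ S.m := fun h => hx0D (h ▸ hm)
  have hx1Icc : x0 - 1 ∈ Finset.Icc S.m S.e := by rw [Finset.mem_Icc]; omega
  have hx1D : x0 - 1 ∈ S.D := by
    by_contra hc
    have : x0 - 1 ∈ G := by rw [hG, Finset.mem_filter]; exact ⟨hx1Icc, hc⟩
    have := G.min'_le _ this
    omega
  have hx0s : x0 ∈ supp S.A' := by
    rw [S.supp_A'_eq, Finset.mem_sdiff]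
    exact ⟨S.Icc_subset_supp (by rw [Finset.mem_Icc]; omega), hx0D⟩
  have : x0 ∈ S.Cset := by
    rw [Cset, Finset.mem_filter]
    exact ⟨hx0s, hx1D⟩
  exact Finset.card_pos.mpr ⟨x0, this⟩

lemma bottom_singleton (hm1 : S.m - 1 ∉ supp S.A) : S.m ∈ S.T := by
  have hk : S.k - 1 < S.k := by have := S.kpos; omega
  set P := S.ch.get ⟨S.k - 1, hk⟩ with hP
  have hPch : P ∈ S.ch := S.ch.get_mem _
  have hPv := S.hvch P hPch
  have hend := S.hends (S.k - 1) hk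
  have hend2 : P.2 = S.m := by
    rw [← hP] at hend
    have hkc : ((S.k - 1 : ℕ) : ℤ) = (S.k : ℤ) - 1 := by
      have := S.kpos; omega
    rw [m]
    omega
  have hP1 : P.1 = S.m := by
    by_contra hne
    apply hm1
    rw [mem_supp]
    exact ⟨P, S.mem_A.mpr (Or.inl hPch), by omega, by omega⟩
  rw [S.mem_T]
  exact ⟨P, hPch, by omega, hend2⟩

lemma e_not_in_image : ∀ w ∈ (S.D.erase S.e).image (· + 1), S.m + 1 ≤ w := by
  intro w hw
  rw [Finset.mem_image] at hw
  obtain ⟨z, hz, hzw⟩ := hw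
  have := S.D_subset (Finset.mem_of_mem_erase hz)
  rw [Finset.mem_Icc] at this
  omega

lemma dropLe : S.D.card + S.Bset.card ≤ 1 + S.Cset.card + S.T.card := by
  by_cases heD : S.e ∈ S.D
  · have hcard : (S.D.erase S.e).card + 1 = S.D.card := by
      rw [Finset.card_erase_of_mem heD]
      have : 0 < S.D.card := Finset.card_pos.mpr ⟨S.e, heD⟩
      omega
    by_cases hB : S.Bset.card = 0
    · have := S.D_erase_le_T
      omega
    · have hBne : S.Bset.Nonempty := Finset.card_pos.mp (by omega)
      obtain ⟨z, hz⟩ := hBne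
      obtain ⟨hzm, hmD, hm1⟩ := S.Bset_mem hz
      by_cases hfull : ∀ z ∈ Finset.Icc S.m S.e, z ∈ S.D
      · -- whole interval vanishes: bottom chain element is singleton, not in image
        have hmT := S.bottom_singleton hm1
        have hmim : S.m ∉ (S.D.erase S.e).image (· + 1) := by
          intro hc
          have := S.e_not_in_image _ hc
          omega
        have := S.D_erase_lt_T hmT hmim
        have := S.B_le
        omega
      · push_neg at hfull
        have hC := S.C_pos hmD hfull
        have := S.D_erase_le_T
        have := S.B_le
        omega
  · have herase : S.D.erase S.e = S.D := Finset.erase_eq_of_notMem heD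
    have h1 := S.D_erase_le_T
    rw [herase] at h1
    have := S.B_le
    omega

lemma dropStrict (hw : ∃ y : ℤ, (y, y) ∈ S.ch ∧ y ∈ supp S.A') :
    S.D.card + S.Bset.card ≤ S.Cset.card + S.T.card := by
  obtain ⟨y, hych, hysupp⟩ := hw
  have hyD : y ∉ S.D := by
    rw [D, Finset.mem_sdiff]
    intro h
    exact h.2 hysupp
  have hyIcc : S.m ≤ y ∧ y ≤ S.e := by
    have := S.end_range hych
    simpa using this
  by_cases hye : y = S.e
  · -- head singleton case : e ∉ D
    have heD : S.e ∉ S.D := hye ▸ hyD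
    have herase : S.D.erase S.e = S.D := Finset.erase_eq_of_notMem heD
    have h1 := S.D_erase_le_T
    rw [herase] at h1
    by_cases hB : S.Bset.card = 0
    · omega
    · have hBne : S.Bset.Nonempty := Finset.card_pos.mp (by omega)
      obtain ⟨z, hz⟩ := hBne
      obtain ⟨hzm, hmD, hm1⟩ := S.Bset_mem hz
      have hC := S.C_pos hmD ⟨y, by rw [Finset.mem_Icc]; omega, hyD⟩
      have := S.B_le
      omega
  · -- interior singleton: the previous chain element is also a singleton with end y+1 ∉ image
    obtain ⟨i, hi, hget⟩ := S.ends_mem hych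
    have hyi : y = S.e - i := by
      have := S.hends i hi
      rw [hget] at this
      simpa using this
    have hipos : 0 < i := by
      rcases Nat.eq_zero_or_pos i with h | h
      · exfalso; apply hye; subst h; simpa using hyi
      · exact h
    have hi1 : i - 1 < S.k := by omega
    have hklen : S.k = S.ch.length := rfl
    have hrel : ChRel S.r' (S.ch.get ⟨i - 1, by unfold k at hi; omega⟩) (S.ch.get ⟨i - 1 + 1, by unfold k at hi; omega⟩) :=
      (List.isChain_iff_getElem.mp S.hchain) (i-1) (by unfold k at hi; omega)
    have hieq : i - 1 + 1 = i := by omega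
    set P := S.ch.get ⟨i - 1, hi1⟩ with hP
    have hPend := S.hends (i-1) hi1
    have hgeti : S.ch.get ⟨i - 1 + 1, by omega⟩ = (y, y) := by
      have : (⟨i - 1 + 1, by omega⟩ : Fin S.ch.length) = ⟨i, hi⟩ := by
        ext; simpa using hieq
      rw [this, hget]
    rw [hgeti] at hrel
    obtain ⟨hrel1, hrel2, hrel3, _⟩ := hrel
    -- P.1 = y + 1 and P.2 = y + 1
    have hPi : ((i - 1 : ℕ) : ℤ) = (i : ℤ) - 1 := by omega
    have hP2 : P.2 = y + 1 := by rw [← hP] at hPend; omega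
    have hP1 : P.1 = y + 1 := by
      simp only [← hP] at hrel1 hrel3
      omega
    have hyT : y + 1 ∈ S.T := S.mem_T.mpr ⟨P, S.ch.get_mem _, by omega, hP2⟩
    have hyim : y + 1 ∉ (S.D.erase S.e).image (· + 1) := by
      intro hc
      rw [Finset.mem_image] at hc
      obtain ⟨z, hz, hzw⟩ := hc
      have : z = y := by omega
      exact hyD (this ▸ Finset.mem_of_mem_erase hz)
    have hlt := S.D_erase_lt_T hyT hyim
    by_cases heD : S.e ∈ S.D
    · have hcard : (S.D.erase S.e).card + 1 = S.D.card := by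
        rw [Finset.card_erase_of_mem heD]
        have : 0 < S.D.card := Finset.card_pos.mpr ⟨S.e, heD⟩
        omega
      by_cases hB : S.Bset.card = 0
      · omega
      · have hBne : S.Bset.Nonempty := Finset.card_pos.mp (by omega)
        obtain ⟨z, hz⟩ := hBne
        obtain ⟨hzm, hmD, hm1⟩ := S.Bset_mem hz
        have hC := S.C_pos hmD ⟨y, by rw [Finset.mem_Icc]; omega, hyD⟩
        have := S.B_le
        omega
    · have herase : S.D.erase S.e = S.D := Finset.erase_eq_of_notMem heD
      rw [herase] at hlt
      have := S.B_le
      omega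


lemma pairwise_bases : List.Pairwise (fun a b : Segment => b.1 < a.1) S.ch := by
  have h : List.Chain' (fun a b : Segment => b.1 < a.1) S.ch :=
    List.IsChain.imp (fun a b h => h.1) S.hchain
  haveI : IsTrans Segment (fun a b : Segment => b.1 < a.1) :=
    ⟨fun a b c h1 h2 => lt_trans h2 h1⟩
  exact List.isChain_iff_pairwise.mp h

lemma A_eq : S.A = (S.ch : Multiset Segment) + (S.r' : Multiset Segment) := rfl

lemma A'_eq : S.A' = (S.r' : Multiset Segment) + (S.fm : Multiset Segment) := rfl

lemma nested_prop (hN : Nested S.A) :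
    Nested S.A' ∨ ∃ y : ℤ, (y, y) ∈ S.ch ∧ y ∈ supp S.A' := by
  classical
  rw [nested_iff] at hN
  obtain ⟨Δ, hΔ, Δ', hΔ', h1, h2⟩ := hN
  have hklen : S.k = S.ch.length := rfl
  have hkpos := S.kpos
  by_cases hc : Δ ∈ (S.ch : Multiset Segment)
  · have hΔch : Δ ∈ S.ch := by exact_mod_cast hc
    have hΔv := S.hvch Δ hΔch
    have herase : S.A.erase Δ = (S.ch : Multiset Segment).erase Δ + (S.r' : Multiset Segment) := by
      rw [S.A_eq, Multiset.erase_add_left_pos _ hc]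
    rw [herase, Multiset.mem_add] at hΔ'
    rcases hΔ' with hΔ' | hΔ'
    · -- both occurrences in the chain: impossible
      exfalso
      have hnd : S.ch.Nodup :=
        S.pairwise_ends.imp (fun {a b} h => by intro he; rw [he] at h; exact lt_irrefl _ h)
      have hndm : ((S.ch : Multiset Segment)).Nodup := by exact_mod_cast hnd
      rw [hndm.mem_erase_iff] at hΔ'
      obtain ⟨hΔ'ne, hΔ'mem⟩ := hΔ'
      have hΔ'ch : Δ' ∈ S.ch := by exact_mod_cast hΔ'mem
      obtain ⟨i, hi, hgi⟩ := S.ends_mem hΔch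
      obtain ⟨j, hj, hgj⟩ := S.ends_mem hΔ'ch
      have hei := S.hends i hi
      have hej := S.hends j hj
      rw [hgi] at hei
      rw [hgj] at hej
      have hij : i ≠ j := by
        intro h
        apply hΔ'ne
        subst h
        rw [← hgj, ← hgi]
      have hilt : i < j := by
        have : (i : ℤ) < (j : ℤ) ∨ (i : ℤ) = (j : ℤ) ∨ (j : ℤ) < (i : ℤ) := by omega
        rcases this with h | h | h
        · exact_mod_cast h
        · exact absurd (by exact_mod_cast h) hij
        · exfalso; omega
      have hbase := List.pairwise_iff_get.mp S.pairwise_bases ⟨i, hi⟩ ⟨j, hj⟩ hilt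
      rw [hgi, hgj] at hbase
      omega
    · -- Δ in the chain, Δ' among the unchosen segments
      have hΔ'r : Δ' ∈ S.r' := by exact_mod_cast hΔ'
      have hΔ'v := S.hvr Δ' hΔ'r
      obtain ⟨i, hi, hgi⟩ := S.ends_mem hΔch
      have hei := S.hends i hi
      rw [hgi] at hei
      by_cases hEq : Δ'.2 = Δ.2
      · by_cases hi0 : i = 0
        · -- head of the chain: maximality of the base
          subst hi0
          have hΔe : Δ.2 = S.e := by simpa using hei
          have hmax := S.hmax Δ' hΔ'r (by omega) (by omega)
          have hg0 : S.ch.get ⟨0, by omega⟩ = Δ := hgi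
          rw [hg0] at hmax
          have hΔΔ' : Δ' = Δ := Prod.ext (le_antisymm hmax h1) hEq
          by_cases hsing : Δ.1 = Δ.2
          · right
            refine ⟨Δ.2, ?_, ?_⟩
            · have : (Δ.2, Δ.2) = Δ := Prod.ext (by omega) rfl
              rw [this]; exact hΔch
            · rw [mem_supp]
              exact ⟨Δ', S.mem_A'.mpr (Or.inl hΔ'r), by omega, by omega⟩
          · left
            rw [S.A'_eq]
            refine nested_of_parts (Y := (Δ.1, Δ.2 - 1)) hΔ'r
              (S.mem_fm.mpr ⟨Δ, hΔch, by omega, rfl⟩) (by omega) (by omega)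
        · -- interior chain element: maximality clause of the chosen link
          have hipos : 0 < i := Nat.pos_of_ne_zero hi0
          have hi1 : i - 1 < S.k := by omega
          have hrel : ChRel S.r' (S.ch.get ⟨i - 1, by omega⟩) (S.ch.get ⟨i - 1 + 1, by omega⟩) :=
            (List.isChain_iff_getElem.mp S.hchain) (i-1) (by omega)
          have hieq : i - 1 + 1 = i := by omega
          set P := S.ch.get ⟨i - 1, hi1⟩ with hP
          have hPend := S.hends (i-1) hi1
          have hgeti : S.ch.get ⟨i - 1 + 1, by omega⟩ = Δ := by
            have : (⟨i - 1 + 1, by omega⟩ : Fin S.ch.length) = ⟨i, hi⟩ := by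
              ext; simpa using hieq
            rw [this, hgi]
          rw [hgeti] at hrel
          obtain ⟨hrel1, hrel2, hrel3, hrel4⟩ := hrel
          have hr1 : Δ.1 < P.1 := by rw [hP]; exact hrel1
          have hr2 : Δ.2 = P.2 - 1 := by rw [hP]; exact hrel2
          have hr4 : ∀ x ∈ S.r', x.1 < P.1 → x.2 = P.2 - 1 → x.1 ≤ Δ.1 := by
            rw [hP]; exact hrel4
          have hPi : ((i - 1 : ℕ) : ℤ) = (i : ℤ) - 1 := by omega
          have hP2 : P.2 = Δ.2 + 1 := by omega
          by_cases hx1 : Δ'.1 < P.1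
          · have hle := hr4 Δ' hΔ'r hx1 (by omega)
            have hΔΔ' : Δ' = Δ := Prod.ext (le_antisymm hle h1) hEq
            by_cases hsing : Δ.1 = Δ.2
            · right
              refine ⟨Δ.2, ?_, ?_⟩
              · have : (Δ.2, Δ.2) = Δ := Prod.ext (by omega) rfl
                rw [this]; exact hΔch
              · rw [mem_supp]
                exact ⟨Δ', S.mem_A'.mpr (Or.inl hΔ'r), by omega, by omega⟩
            · left
              rw [S.A'_eq]
              refine nested_of_parts (Y := (Δ.1, Δ.2 - 1)) hΔ'r
                (S.mem_fm.mpr ⟨Δ, hΔch, by omega, rfl⟩) (by omega) (by omega)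
          · -- Δ' is nested inside the previous chain element P
            push_neg at hx1
            have hPch : P ∈ S.ch := S.ch.get_mem _
            left
            rw [S.A'_eq]
            refine nested_of_parts' (X := (P.1, P.2 - 1)) (Y := Δ')
              (S.mem_fm.mpr ⟨P, hPch, by omega, rfl⟩) hΔ'r (by simpa using hx1) (by simp; omega)
      · -- Δ'.2 < Δ.2 : the reduced Δ still contains Δ'
        left
        rw [S.A'_eq]
        refine nested_of_parts' (X := (Δ.1, Δ.2 - 1)) (Y := Δ')
          (S.mem_fm.mpr ⟨Δ, hΔch, by omega, rfl⟩) hΔ'r (by simpa using h1) (by simp; omega)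
  · -- Δ among the unchosen segments
    have hΔr : Δ ∈ S.r' := by
      rcases S.mem_A.mp hΔ with h | h
      · exact absurd (by exact_mod_cast h : Δ ∈ (S.ch : Multiset Segment)) hc
      · exact h
    have hΔv := S.hvr Δ hΔr
    have hrm : Δ ∈ (S.r' : Multiset Segment) := by exact_mod_cast hΔr
    have herase : S.A.erase Δ = (S.ch : Multiset Segment) + (S.r' : Multiset Segment).erase Δ := by
      rw [S.A_eq, Multiset.erase_add_right_pos _ hrm]
    rw [herase, Multiset.mem_add] at hΔ'
    rcases hΔ' with hΔ' | hΔ'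
    · -- Δ' in the chain
      have hΔ'ch : Δ' ∈ S.ch := by exact_mod_cast hΔ'
      have hΔ'v := S.hvch Δ' hΔ'ch
      by_cases hsing : Δ'.1 = Δ'.2
      · right
        refine ⟨Δ'.2, ?_, ?_⟩
        · have : (Δ'.2, Δ'.2) = Δ' := Prod.ext (by omega) rfl
          rw [this]; exact hΔ'ch
        · rw [mem_supp]
          exact ⟨Δ, S.mem_A'.mpr (Or.inl hΔr), by omega, by omega⟩
      · left
        rw [S.A'_eq]
        refine nested_of_parts (X := Δ) (Y := (Δ'.1, Δ'.2 - 1)) hΔr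
          (S.mem_fm.mpr ⟨Δ', hΔ'ch, by omega, rfl⟩) (by simpa using h1) (by simp; omega)
    · -- both among the unchosen segments
      left
      rw [S.A'_eq]
      exact nested_of_left hΔr (by exact_mod_cast hΔ') h1 h2


lemma tsize_step : totalSize (S.r' ++ S.fm) + S.k = totalSize S.ch + totalSize S.r' := by
  have h1 : totalSize (S.r' ++ S.fm) = totalSize S.r' + totalSize S.fm := by
    simp [totalSize]
  have h2 : totalSize S.fm + S.k = totalSize S.ch := by
    rw [fm, k]
    exact totalSize_filterMap S.ch S.hvch
  omega

end SD

end Aux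


def tsize (α : Multisegment) : ℕ := (α.map fun Δ => (Δ.2 - Δ.1 + 1).toNat).sum

lemma totalSize_coe (l : List Segment) : totalSize l = tsize (l : Multiset Segment) := by
  simp [totalSize, tsize]

lemma tsize_add (s t : Multisegment) : tsize (s + t) = tsize s + tsize t := by
  simp [tsize]

lemma head?_get0 {l : List Segment} {a : Segment} (h : l.head? = some a) (h0 : 0 < l.length) :
    l.get ⟨0, h0⟩ = a := by
  cases l with
  | nil => simp at h
  | cons b t =>
    have : b = a := by simpa using h
    simpa using this

lemma mw_step_full (l : List Segment) (hl : l ≠ []) (hv : ∀ x ∈ l, x.1 ≤ x.2) :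
    ∃ (S : SD) (Δd : Segment), mwIter l = some (Δd, S.r' ++ S.fm) ∧
      S.A = (l : Multiset Segment) := by
  obtain ⟨e, Δe, ch, r', hiter, hchne, hchhead, hΔe2, hms, hchain, hemax, hheadmax⟩ :=
    mwIter_spec l hl hv
  have hsubch : ∀ x ∈ ch, x ∈ l := by
    intro x hx
    have : x ∈ (ch : Multiset Segment) + (r' : Multiset Segment) :=
      Multiset.mem_add.mpr (Or.inl (by exact_mod_cast hx))
    rw [hms] at this
    exact_mod_cast this
  have hsubr : ∀ x ∈ r', x ∈ l := by
    intro x hx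
    have : x ∈ (ch : Multiset Segment) + (r' : Multiset Segment) :=
      Multiset.mem_add.mpr (Or.inr (by exact_mod_cast hx))
    rw [hms] at this
    exact_mod_cast this
  have hvch : ∀ x ∈ ch, x.1 ≤ x.2 := fun x hx => hv x (hsubch x hx)
  have hvr : ∀ x ∈ r', x.1 ≤ x.2 := fun x hx => hv x (hsubr x hx)
  have hends : ∀ i (h : i < ch.length), (ch.get ⟨i, h⟩).2 = e - i := by
    intro i h
    have := chain_ends hchain hchhead i h
    omega
  have hmaxf : ∀ x ∈ r', x.2 = e → ∀ (h0 : 0 < ch.length), x.1 ≤ (ch.get ⟨0, h0⟩).1 := by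
    intro x hx hxe h0
    rw [head?_get0 hchhead h0]
    exact hheadmax x (hsubr x hx) hxe
  exact ⟨⟨ch, r', e, hchne, hchain, hends, hvch, hvr, hmaxf⟩, _, hiter, hms⟩

lemma mwAux_nil (n : ℕ) : mwAux n [] = [] := by
  cases n with
  | zero => rfl
  | succ n => rfl

lemma mwAux_step {l : List Segment} {Δd : Segment} {l' : List Segment}
    (h : mwIter l = some (Δd, l')) (n : ℕ) : mwAux (n + 1) l = Δd :: mwAux n l' := by
  show (match mwIter l with
    | none => []
    | some (Δ', l') => Δ' :: mwAux n l') = Δd :: mwAux n l'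
  rw [h]

lemma SD.A'_coe (S : SD) : ((S.r' ++ S.fm : List Segment) : Multiset Segment) = S.A' := by
  rw [SD.A'_eq]
  exact_mod_cast (Multiset.coe_add _ _)

lemma step_totalSize {l : List Segment} (S : SD) (hSA : S.A = (l : Multiset Segment)) :
    totalSize (S.r' ++ S.fm) + S.k = totalSize l := by
  have h2 := S.tsize_step
  have h3 : totalSize S.ch + totalSize S.r' = totalSize l := by
    rw [totalSize_coe, totalSize_coe, totalSize_coe, ← tsize_add]
    rw [show (S.ch : Multiset Segment) + (S.r' : Multiset Segment) = (l : Multiset Segment)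
      from hSA ▸ S.A_eq ▸ rfl]
  omega

lemma mwAux_congr : ∀ n m (l : List Segment), (∀ x ∈ l, x.1 ≤ x.2) →
    totalSize l ≤ n → totalSize l ≤ m → mwAux n l = mwAux m l := by
  intro n
  induction n with
  | zero =>
    intro m l hv h0 _
    have : l = [] := totalSize_eq_zero hv (Nat.le_zero.mp h0)
    subst this
    rw [mwAux_nil, mwAux_nil]
  | succ n ih =>
    intro m l hv hn hm
    by_cases hl : l = []
    · subst hl; rw [mwAux_nil, mwAux_nil]
    · have hts : 1 ≤ totalSize l := by
        rcases Nat.eq_zero_or_pos (totalSize l) with h | h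
        · exact absurd (totalSize_eq_zero hv h) hl
        · exact h
      cases m with
      | zero => exact absurd (totalSize_eq_zero hv (Nat.le_zero.mp hm)) hl
      | succ m =>
        obtain ⟨S, Δd, hiter, hSA⟩ := mw_step_full l hl hv
        have hval' : ∀ x ∈ S.r' ++ S.fm, x.1 ≤ x.2 := by
          intro x hx
          apply S.valid_A'
          rw [S.mem_A']
          exact (List.mem_append.mp hx).imp id id
        have hts' : totalSize (S.r' ++ S.fm) + S.k = totalSize l := step_totalSize S hSA
        have hk := S.kpos
        rw [mwAux_step hiter n, mwAux_step hiter m]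
        congr 1
        exact ih m _ hval' (by omega) (by omega)


lemma not_nested_zero : ¬ Nested 0 := by
  rintro ⟨Δ, Δ', β, h, -, -⟩
  exact Multiset.cons_ne_zero h.symm

lemma supp_zero : supp 0 = ∅ := by simp [supp]

lemma main_ineq : ∀ N (l : List Segment), totalSize l ≤ N → (∀ x ∈ l, x.1 ≤ x.2) →
    ((Ssize (l : Multiset Segment) : ℤ) + (comp (l : Multiset Segment) : ℤ)
        - (nSeg (l : Multiset Segment) : ℤ) ≤ ((mwAux (totalSize l) l).length : ℤ)) ∧
    (Nested (l : Multiset Segment) →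
      (Ssize (l : Multiset Segment) : ℤ) + (comp (l : Multiset Segment) : ℤ)
        - (nSeg (l : Multiset Segment) : ℤ) + 1 ≤ ((mwAux (totalSize l) l).length : ℤ)) := by
  intro N
  induction N with
  | zero =>
    intro l h0 hv
    have hl : l = [] := totalSize_eq_zero hv (Nat.le_zero.mp h0)
    subst hl
    have hz : (([] : List Segment) : Multiset Segment) = 0 := rfl
    rw [hz]
    constructor
    · simp [Ssize, comp, nSeg, supp_zero, mwAux_nil]
    · intro h
      exact absurd h not_nested_zero
  | succ N ih =>
    intro l hN hv
    by_cases hl : l = []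
    · subst hl
      have hz : (([] : List Segment) : Multiset Segment) = 0 := rfl
      rw [hz]
      constructor
      · simp [Ssize, comp, nSeg, supp_zero, mwAux_nil]
      · intro h
        exact absurd h not_nested_zero
    · obtain ⟨S, Δd, hiter, hSA⟩ := mw_step_full l hl hv
      have hval' : ∀ x ∈ S.r' ++ S.fm, x.1 ≤ x.2 := by
        intro x hx
        apply S.valid_A'
        rw [S.mem_A']
        exact (List.mem_append.mp hx).imp id id
      have hts' : totalSize (S.r' ++ S.fm) + S.k = totalSize l := step_totalSize S hSA
      have hk := S.kpos
      have hts1 : 1 ≤ totalSize l := by omega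
      -- length relation
      have hlen : (mwAux (totalSize l) l).length
          = 1 + (mwAux (totalSize (S.r' ++ S.fm)) (S.r' ++ S.fm)).length := by
        have h1 : totalSize l = (totalSize l - 1) + 1 := by omega
        rw [h1, mwAux_step hiter]
        simp only [List.length_cons]
        have := mwAux_congr (totalSize l - 1) (totalSize (S.r' ++ S.fm)) (S.r' ++ S.fm)
          hval' (by omega) le_rfl
        rw [this]
        omega
      have hIH := ih (S.r' ++ S.fm) (by omega) hval'
      rw [S.A'_coe] at hIH
      have hSs := S.Ssize_split
      have hcc := S.comp_split
      have hnn := S.nSeg_split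
      have hdrop := S.dropLe
      have hgoal1 : (Ssize (l : Multiset Segment) : ℤ) = Ssize S.A := by rw [hSA]
      have hgoal2 : (comp (l : Multiset Segment) : ℤ) = comp S.A := by rw [hSA]
      have hgoal3 : (nSeg (l : Multiset Segment) : ℤ) = nSeg S.A := by rw [hSA]
      constructor
      · have h1 := hIH.1
        rw [hgoal1, hgoal2, hgoal3, hlen]
        push_cast at h1 ⊢
        omega
      · intro hNest
        have hNA : Nested S.A := hSA ▸ hNest
        rcases S.nested_prop hNA with hN' | hwit
        · have h2 := hIH.2 hN'
          rw [hgoal1, hgoal2, hgoal3, hlen]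
          push_cast at h2 ⊢
          omega
        · have hstrict := S.dropStrict hwit
          have h1 := hIH.1
          rw [hgoal1, hgoal2, hgoal3, hlen]
          push_cast at h1 ⊢
          omega

lemma ladder_of_not_nested : ∀ n (α : Multisegment), Multiset.card α ≤ n →
    ¬ Nested α → IsLadder α := by
  intro n
  induction n with
  | zero =>
    intro α hcard _
    have : α = 0 := Multiset.card_eq_zero.mp (Nat.le_zero.mp hcard)
    subst this
    exact ⟨[], rfl, List.isChain_nil⟩
  | succ n ih =>
    intro α hcard hnn
    by_cases hα : α = 0
    · subst hα; exact ⟨[], rfl, List.isChain_nil⟩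
    · -- pick an element of minimal base
      have hlne : α.toList ≠ [] := by
        intro h
        apply hα
        rw [← Multiset.coe_toList α, h]
        rfl
      have hmapne : α.toList.map (fun Δ => Δ.1) ≠ [] := by
        intro h; exact hlne (List.map_eq_nil_iff.mp h)
      obtain ⟨y, hy⟩ := List.exists_mem_of_ne_nil _ hmapne
      have hsome := List.isSome_min?_of_mem hy
      obtain ⟨b, hb⟩ := Option.isSome_iff_exists.mp hsome
      have hbmem : b ∈ α.toList.map (fun Δ => Δ.1) :=
        List.min?_mem hb
      have hble' : ∀ x ∈ α.toList.map (fun Δ => Δ.1), b ≤ x :=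
        (List.le_min?_iff hb).mp le_rfl
      obtain ⟨Δ, hΔl, hΔb⟩ := List.mem_map.mp hbmem
      have hΔα : Δ ∈ α := by rw [← Multiset.mem_toList]; exact hΔl
      have hble : ∀ x ∈ α, Δ.1 ≤ x.1 := by
        intro x hx
        rw [hΔb]
        exact hble' _ (List.mem_map.mpr ⟨x, Multiset.mem_toList.mpr hx, rfl⟩)
      -- Δ strictly precedes everything else
      have hkey : ∀ x ∈ α.erase Δ, Δ.1 < x.1 ∧ Δ.2 < x.2 := by
        intro x hx
        have hxα : x ∈ α := Multiset.mem_of_mem_erase hx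
        have hb1 : Δ.1 ≤ x.1 := hble x hxα
        have h1 : Δ.1 < x.1 := by
          rcases lt_or_eq_of_le hb1 with h | h
          · exact h
          · exfalso
            by_cases h2 : x.2 ≤ Δ.2
            · exact hnn (nested_iff.mpr ⟨Δ, hΔα, x, hx, hb1, h2⟩)
            · apply hnn
              refine nested_iff.mpr ⟨x, hxα, Δ, ?_, by omega, by omega⟩
              by_cases hxΔ : Δ = x
              · rw [← hxΔ] at hx ⊢; exact hx
              · rw [Multiset.mem_erase_of_ne hxΔ]
                exact hΔα
        have h2 : Δ.2 < x.2 := by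
          by_contra h2
          exact hnn (nested_iff.mpr ⟨Δ, hΔα, x, hx, hb1, by omega⟩)
        exact ⟨h1, h2⟩
      have hnn' : ¬ Nested (α.erase Δ) := by
        intro hN
        apply hnn
        rw [nested_iff] at hN ⊢
        obtain ⟨X, hX, Y, hY, hXY1, hXY2⟩ := hN
        refine ⟨X, Multiset.mem_of_mem_erase hX, Y, ?_, hXY1, hXY2⟩
        exact Multiset.mem_of_le (Multiset.erase_le_erase X (Multiset.erase_le Δ α)) hY
      have hcard' : Multiset.card (α.erase Δ) ≤ n := by
        have h1 := Multiset.card_erase_of_mem hΔα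
        rw [Nat.pred_eq_sub_one] at h1
        have h2 : 0 < Multiset.card α := Multiset.card_pos.mpr hα
        omega
      obtain ⟨l', hl'coe, hl'chain⟩ := ih (α.erase Δ) hcard' hnn'
      refine ⟨Δ :: l', ?_, ?_⟩
      · have : ((Δ :: l' : List Segment) : Multiset Segment) = Δ ::ₘ (l' : Multiset Segment) := by
          simp [Multiset.cons_coe]
        rw [this, hl'coe]
        exact Multiset.cons_erase hΔα
      · refine List.isChain_cons.mpr ⟨?_, ?_⟩
        · intro y hy
          apply hkey
          rw [← hl'coe]
          have : y ∈ l' := by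
            cases l' with
            | nil => simp at hy
            | cons a t =>
              have hya : a = y := by simpa using hy
              rw [← hya]; exact List.mem_cons_self
          exact_mod_cast this
        · exact hl'chain

/-- if `n_{α̃} + n_α = S_α + c_α` then `α` is a ladder multisegment. -/
theorem stmt13 (α : Multisegment) (hα : IsMultisegment α)
    (h : nSeg (dual α) + nSeg α = Ssize α + comp α) :
    IsLadder α := by
  have hcoe : ((α.toList : List Segment) : Multiset Segment) = α := Multiset.coe_toList α
  have hv : ∀ x ∈ α.toList, x.1 ≤ x.2 := by
    intro x hx
    exact hα x (Multiset.mem_toList.mp hx)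
  have hmain := main_ineq (totalSize α.toList) α.toList le_rfl hv
  rw [hcoe] at hmain
  have hdual : (nSeg (dual α) : ℤ) = ((mwAux (totalSize α.toList) α.toList).length : ℤ) := by
    rw [dual, nSeg]
    simp [Multiset.coe_card]
  have hnot : ¬ Nested α := by
    intro hN
    have h2 := hmain.2 hN
    rw [← hdual] at h2
    have : (nSeg (dual α) : ℤ) + nSeg α = (Ssize α : ℤ) + comp α := by exact_mod_cast h
    omega
  exact ladder_of_not_nested (Multiset.card α) α le_rfl hnot
end

section
/- Let α be a multisegment with minimum value −e and maximum value e, containing the symmetric simple sub-multisegment α₁ = {[−e,b], [−e+1,b+1], ..., [−b,e]}, and suppose the shortest segments of α containing −e and e both lie in α₁ (having length e+b+1). Then any irreducible ladder sub-multisegment γ of α generating a segment containing {b, ..., e} (i.e., with n_γ ≥ e−b+1 segments and longest segment length L_γ ≥ e+b+1) satisfies S_γ = 2e+1 and must equal α₁. -/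
/-- Auxiliary: a quantitative gap bound for strictly increasing integer sequences. -/
lemma gap_aux {N : ℕ} {f : ℕ → ℤ}
    (hf : ∀ i j : ℕ, i < j → j < N → f i < f j) :
    ∀ i j : ℕ, i ≤ j → j < N → f i + ((j : ℤ) - i) ≤ f j := by
  intro i j hij hj
  obtain ⟨d, rfl⟩ := Nat.exists_eq_add_of_le hij
  clear hij
  induction d with
  | zero => simp
  | succ d ih =>
    have he : i + (d + 1) = (i + d) + 1 := by omega
    rw [he] at hj ⊢
    have h2 := ih (by omega)
    have h3 := hf (i + d) (i + d + 1) (by omega) hj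
    push_cast at h2 ⊢
    omega

/-- Auxiliary: an element of a list attaining a positive lower bound for foldr max. -/
lemma foldr_max_aux {v : ℤ} (hv : 0 < v) :
    ∀ l : List ℤ, v ≤ l.foldr max 0 → ∃ x ∈ l, v ≤ x := by
  intro l
  induction l with
  | nil => intro h; simp at h; omega
  | cons a t ih =>
    intro h
    simp only [List.foldr_cons] at h
    rcases le_max_iff.mp h with h' | h'
    · exact ⟨a, List.mem_cons_self, h'⟩
    · obtain ⟨x, hx, hvx⟩ := ih h'
      exact ⟨x, List.mem_cons_of_mem _ hx, hvx⟩

/-- Auxiliary: the support of the explicit symmetric-simple list is `[-e, e]`. -/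
lemma supp_aux {b e : ℤ} {N : ℕ} (hb : -e ≤ b) (hbe : b ≤ e) (hN : (N : ℤ) = e - b + 1) :
    supp (((List.range N).map (fun i : ℕ => ((-e + (i : ℤ), b + (i : ℤ)) : Segment))) :
      Multiset Segment) = Finset.Icc (-e) e := by
  ext x
  simp only [supp, Multiset.mem_toFinset, Finset.mem_biUnion, Multiset.mem_coe,
    List.mem_map, List.mem_range, Finset.mem_Icc]
  constructor
  · rintro ⟨Δ, ⟨i, hi, rfl⟩, hx1, hx2⟩
    omega
  · rintro ⟨h1, h2⟩
    refine ⟨_, ⟨(x - b).toNat, by omega, rfl⟩, by simp; omega⟩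

/-- if `α` has extreme values `±e`, contains the symmetric simple
sub-multisegment `α₁ = {[-e,b],...,[-b,e]}`, and the shortest segments of `α`
containing `-e` and `e` lie in `α₁` (length `e+b+1`), then any irreducible ladder
sub-multisegment `γ` of `α` generating a segment containing `{b,...,e}`
(so `n_γ ≥ e-b+1` and `L_γ ≥ e+b+1`) satisfies `S_γ = 2e+1` and equals `α₁`. -/
theorem stmt16 (b e : ℤ) (hb : -e ≤ b) (hbe : b ≤ e) (α : Multisegment)
    (hα : IsMultisegment α)
    (hsub : symmSimple b e ≤ α)
    (hrange : ∀ Δ ∈ α, -e ≤ Δ.1 ∧ Δ.2 ≤ e)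
    (hminShort : ∀ Δ ∈ α, Δ.1 = -e → b ≤ Δ.2)
    (hmaxShort : ∀ Δ ∈ α, Δ.2 = e → Δ.1 ≤ -b)
    (γ : Multisegment) (hγ : γ ≤ α) (hlad : IsLadder γ) (hirr : Cmax γ = 1)
    (hn : e - b + 1 ≤ (nSeg γ : ℤ)) (hL : e + b + 1 ≤ Lmax γ) :
    (Ssize γ : ℤ) = 2 * e + 1 ∧ γ = symmSimple b e := by
  obtain ⟨l, hl, hchain⟩ := hlad
  have hmemα : ∀ Δ ∈ l, Δ ∈ α := by
    intro Δ hΔ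
    exact Multiset.mem_of_le hγ (by rw [← hl]; exact_mod_cast hΔ)
  set N := l.length with hN
  have hNS : nSeg γ = N := by rw [← hl]; simp [nSeg, hN]
  haveI : IsTrans Segment (fun Δ₁ Δ₂ : Segment => Δ₁.1 < Δ₂.1 ∧ Δ₁.2 < Δ₂.2) :=
    ⟨fun _ _ _ h h' => ⟨h.1.trans h'.1, h.2.trans h'.2⟩⟩
  rw [List.Chain', List.isChain_iff_pairwise, List.pairwise_iff_getElem] at hchain
  have keyB := gap_aux (f := fun i => (l.getD i (0,0)).1) (N := N) ?_
  have keyE := gap_aux (f := fun i => (l.getD i (0,0)).2) (N := N) ?_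
  rotate_left
  · intro i j hij hj
    have := hchain i j (by omega) hj hij
    simpa [List.getD_eq_getElem, hj, (by omega : i < N), List.getElem?_eq_getElem (by omega : i < l.length), List.getElem?_eq_getElem (by omega : j < l.length)] using this.2
  · intro i j hij hj
    have := hchain i j (by omega) hj hij
    simpa [List.getD_eq_getElem, hj, (by omega : i < N), List.getElem?_eq_getElem (by omega : i < l.length), List.getElem?_eq_getElem (by omega : j < l.length)] using this.1
  have hmem : ∀ i : ℕ, i < N → l.getD i (0,0) ∈ α := by
    intro i hi
    apply hmemα
    rw [List.getD_eq_getElem _ _ hi]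
    exact List.getElem_mem hi
  -- find a long segment
  have hlong : ∃ Δ ∈ l, e + b + 1 ≤ Segment.len Δ := by
    have h1 : (e + b + 1 : ℤ) ≤ (l.map Segment.len).foldr max 0 := by
      have hfold : Lmax γ = (l.map Segment.len).foldr max 0 := by
        rw [Lmax, ← hl, Multiset.map_coe, Multiset.coe_fold_r]
      rwa [hfold] at hL
    obtain ⟨x, hx, hvx⟩ := foldr_max_aux (by omega) _ h1
    obtain ⟨Δ, hΔ, rfl⟩ := List.mem_map.mp hx
    exact ⟨Δ, hΔ, hvx⟩
  obtain ⟨Δk, hΔk, hlen⟩ := hlong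
  obtain ⟨k, hk, hΔkeq⟩ := List.getElem_of_mem hΔk
  have hΔkD : l.getD k (0,0) = Δk := by rw [List.getD_eq_getElem _ _ hk, hΔkeq]
  have hNpos : 0 < N := by omega
  -- extremal facts
  have hB0 : -e ≤ (l.getD 0 (0,0)).1 := (hrange _ (hmem 0 hNpos)).1
  have hEl : (l.getD (N-1) (0,0)).2 ≤ e := (hrange _ (hmem (N-1) (by omega))).2
  have hk1 := keyB 0 k (by omega) hk
  have hk2 := keyE k (N-1) (by omega) (by omega)
  have hlen' : e + b ≤ Δk.2 - Δk.1 := by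
    simp only [Segment.len] at hlen; omega
  have hnN : e - b + 1 ≤ (N : ℤ) := by rwa [hNS] at hn
  rw [hΔkD] at hk1 hk2
  -- pin down N, the first base and the last end
  have hNeq : (N : ℤ) = e - b + 1 := by omega
  have hB0eq : (l.getD 0 (0,0)).1 = -e := by omega
  have hEleq : (l.getD (N-1) (0,0)).2 = e := by omega
  have hE0 : b ≤ (l.getD 0 (0,0)).2 := hminShort _ (hmem 0 hNpos) hB0eq
  have hBl : (l.getD (N-1) (0,0)).1 ≤ -b := hmaxShort _ (hmem (N-1) (by omega)) hEleq
  -- every entry is determined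
  have hget : ∀ i : ℕ, i < N → l.getD i (0,0) = (-e + (i : ℤ), b + (i : ℤ)) := by
    intro i hi
    have h1 := keyB 0 i (by omega) hi
    have h2 := keyB i (N-1) (by omega) (by omega)
    have h3 := keyE 0 i (by omega) hi
    have h4 := keyE i (N-1) (by omega) (by omega)
    exact Prod.ext (by omega) (by omega)
  have hlist : l = (List.range N).map (fun i : ℕ => ((-e + (i : ℤ), b + (i : ℤ)) : Segment)) := by
    apply List.ext_getElem (by simp [hN])
    intro i h1 h2
    have hi : i < N := h1
    have hgi := hget i hi
    rw [List.getD_eq_getElem _ _ hi] at hgi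
    simp [hgi]
  have hsymm : symmSimple b e =
      ((List.range N).map (fun i : ℕ => ((-e + (i : ℤ), b + (i : ℤ)) : Segment)) :
        Multiset Segment) := by
    have hNn : (e - b + 1).toNat = N := by omega
    simp [symmSimple, hNn, Multiset.range, Function.comp_def]
  have hγeq : γ = symmSimple b e := by rw [← hl, hlist, hsymm]
  refine ⟨?_, hγeq⟩
  rw [hγeq, Ssize, hsymm, supp_aux hb hbe hNeq, Int.card_Icc]
  omega
end
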